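/- Let φ(t) := (2π)^{-1/2} e^{-t²/2}, Φ(z) := ∫_{-∞}^{z} φ(t) dt, and for ρ ∈ (−1,1) let h_ρ(x,y) := (2π√(1−ρ²))^{-1} exp(−(x² − 2ρxy + y²)/(2(1−ρ²))) and G(ρ; a, b) := ∫_{-∞}^{a} ∫_{-∞}^{b} h_ρ(x, y) dy dx − Φ(a)Φ(b). Let ε ∈ (0,1) and let ρ : ℤ → ℝ satisfy |ρ_k| ≤ 1 − ε for all k ≠ 0 and ∑_{k∈ℤ, k≠0} |ρ_k|/|k| < ∞. Fix b ∈ ℝ and λ ∈ ℝ. Then for every a ∈ ℝ the complex series S(a) := ∑_{k∈ℤ, k≠0} G(ρ_k; a, b) · (i/k) · (e^{-ikλ} − 1) converges absolutely, and the function a ↦ S(a) is differentiable at every a ∈ ℝ with derivative S'(a) = ∑_{k∈ℤ, k≠0} φ(a) · (Φ((b − ρ_k a)/√(1−ρ_k²)) − Φ(b)) · (i/k) · (e^{-ikλ} − 1), this series also converging absolutely. -/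

import Mathlib

open Real MeasureTheory

/-- The standard normal density `φ(t) = (2π)^{-1/2} e^{-t²/2}`. -/
noncomputable def stdNormalPDF (t : ℝ) : ℝ := (Real.sqrt (2 * π))⁻¹ * Real.exp (-t ^ 2 / 2)

/-- The standard normal distribution function `Φ(z) = ∫_{-∞}^z φ`. -/
noncomputable def stdNormalCDF (z : ℝ) : ℝ := ∫ t in Set.Iic z, stdNormalPDF t

/-- The bivariate standard normal density with correlation `ρ`. -/
noncomputable def biNormPDF (ρ x y : ℝ) : ℝ :=
  (2 * π * Real.sqrt (1 - ρ ^ 2))⁻¹ *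
    Real.exp (-(x ^ 2 - 2 * ρ * x * y + y ^ 2) / (2 * (1 - ρ ^ 2)))

/-- `G(ρ; a, b)`: the bivariate normal joint distribution function minus the product of
its marginals. -/
noncomputable def Gfun (ρ a b : ℝ) : ℝ :=
  (∫ x in Set.Iic a, ∫ y in Set.Iic b, biNormPDF ρ x y) - stdNormalCDF a * stdNormalCDF b

lemma pdf_nonneg (t : ℝ) : 0 ≤ stdNormalPDF t := by
  unfold stdNormalPDF
  positivity

lemma pdf_le (t : ℝ) : stdNormalPDF t ≤ (Real.sqrt (2 * π))⁻¹ := by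
  unfold stdNormalPDF
  have h1 : Real.exp (-t ^ 2 / 2) ≤ 1 := Real.exp_le_one_iff.2 (by nlinarith [sq_nonneg t])
  have h2 : (0:ℝ) ≤ (Real.sqrt (2 * π))⁻¹ := by positivity
  nlinarith

lemma pdf_continuous : Continuous stdNormalPDF := by
  unfold stdNormalPDF
  fun_prop

lemma pdf_integrable : Integrable stdNormalPDF := by
  have : Integrable fun t : ℝ => (Real.sqrt (2 * π))⁻¹ * Real.exp (-(1/2 : ℝ) * t ^ 2) :=
    (integrable_exp_neg_mul_sq (by norm_num)).const_mul _
  refine this.congr (Filter.Eventually.of_forall fun t => ?_)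
  unfold stdNormalPDF
  ring_nf

-- density factorization
lemma biNorm_factor {ρ : ℝ} (hρ : |ρ| < 1) (x y : ℝ) :
    biNormPDF ρ x y
      = stdNormalPDF x *
        ((Real.sqrt (1 - ρ ^ 2))⁻¹ * stdNormalPDF ((y - ρ * x) / Real.sqrt (1 - ρ ^ 2))) := by
  have h1 : (0:ℝ) < 1 - ρ ^ 2 := by nlinarith [abs_nonneg ρ, sq_abs ρ, sq_nonneg ρ]
  set s := Real.sqrt (1 - ρ ^ 2) with hs
  have hs2 : s ^ 2 = 1 - ρ ^ 2 := Real.sq_sqrt h1.le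
  have hspos : 0 < s := Real.sqrt_pos.2 h1
  have h2pi : (0:ℝ) < 2 * π := by positivity
  have hsq : Real.sqrt (2 * π) * Real.sqrt (2 * π) = 2 * π := Real.mul_self_sqrt h2pi.le
  unfold biNormPDF stdNormalPDF
  have hexp : -x ^ 2 / 2 + -((y - ρ * x) / s) ^ 2 / 2
      = -(x ^ 2 - 2 * ρ * x * y + y ^ 2) / (2 * (1 - ρ ^ 2)) := by
    rw [div_pow, hs2]
    field_simp
    ring
  have h2 : Real.sqrt (2 * π) ≠ 0 := by positivity
  rw [show (Real.sqrt (2 * π))⁻¹ * Real.exp (-x ^ 2 / 2) *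
        (s⁻¹ * ((Real.sqrt (2 * π))⁻¹ * Real.exp (-((y - ρ * x) / s) ^ 2 / 2)))
      = ((Real.sqrt (2 * π))⁻¹ * (Real.sqrt (2 * π))⁻¹ * s⁻¹) *
        (Real.exp (-x ^ 2 / 2) * Real.exp (-((y - ρ * x) / s) ^ 2 / 2)) from by ring,
    ← Real.exp_add, hexp, ← hs]
  congr 1
  rw [← mul_inv, ← mul_inv, hsq]

lemma iic_subst (f : ℝ → ℝ) {s : ℝ} (hs : 0 < s) (μ b : ℝ) :
    ∫ y in Set.Iic b, f ((y - μ) / s) = s * ∫ t in Set.Iic ((b - μ) / s), f t := by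
  set c := (b - μ) / s with hc
  have hiff : ∀ y : ℝ, ((y - μ) / s ≤ c ↔ y ≤ b) := fun y => by
    rw [hc, div_le_div_iff_of_pos_right hs, sub_le_sub_iff_right]
  have key : ∀ y : ℝ, (Set.Iic b).indicator (fun y => f ((y - μ) / s)) y
      = (Set.Iic c).indicator f ((y - μ) / s) := by
    intro y
    by_cases h : y ≤ b <;>
      simp [Set.indicator, Set.mem_Iic, hiff y, h]
  set g := (Set.Iic c).indicator f with hg
  calc ∫ y in Set.Iic b, f ((y - μ) / s)
      = ∫ y, (Set.Iic b).indicator (fun y => f ((y - μ) / s)) y :=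
        (integral_indicator measurableSet_Iic).symm
    _ = ∫ y, (fun z => g (z / s)) (y - μ) := by simp_rw [key]
    _ = ∫ z, g (z / s) := integral_sub_right_eq_self (fun z => g (z / s)) μ
    _ = |s| • ∫ t, g t := MeasureTheory.Measure.integral_comp_div g s
    _ = s * ∫ t in Set.Iic c, f t := by
        rw [abs_of_pos hs, smul_eq_mul, hg, integral_indicator measurableSet_Iic]

lemma inner_integral {ρ : ℝ} (hρ : |ρ| < 1) (b x : ℝ) :
    ∫ y in Set.Iic b, biNormPDF ρ x y
      = stdNormalPDF x * stdNormalCDF ((b - ρ * x) / Real.sqrt (1 - ρ ^ 2)) := by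
  have h1 : (0:ℝ) < 1 - ρ ^ 2 := by nlinarith [sq_abs ρ, abs_nonneg ρ]
  set s := Real.sqrt (1 - ρ ^ 2) with hs
  have hspos : 0 < s := Real.sqrt_pos.2 h1
  calc ∫ y in Set.Iic b, biNormPDF ρ x y
      = ∫ y in Set.Iic b, stdNormalPDF x * (s⁻¹ * stdNormalPDF ((y - ρ * x) / s)) := by
        refine setIntegral_congr_fun measurableSet_Iic fun y _ => ?_
        exact biNorm_factor hρ x y
    _ = stdNormalPDF x * s⁻¹ * ∫ y in Set.Iic b, stdNormalPDF ((y - ρ * x) / s) := by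
        simp_rw [← mul_assoc, integral_const_mul]
    _ = stdNormalPDF x * s⁻¹ * (s * ∫ t in Set.Iic ((b - ρ * x) / s), stdNormalPDF t) := by
        rw [iic_subst stdNormalPDF hspos]
    _ = stdNormalPDF x * stdNormalCDF ((b - ρ * x) / s) := by
        rw [stdNormalCDF]
        field_simp

lemma cdf_nonneg (z : ℝ) : 0 ≤ stdNormalCDF z :=
  setIntegral_nonneg measurableSet_Iic fun t _ => pdf_nonneg t

lemma cdf_le (z : ℝ) : stdNormalCDF z ≤ ∫ t, stdNormalPDF t :=
  setIntegral_le_integral pdf_integrable (Filter.Eventually.of_forall pdf_nonneg)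

lemma ftc_Iic {g : ℝ → ℝ} (hc : Continuous g) (hi : Integrable g) (a : ℝ) :
    HasDerivAt (fun u => ∫ x in Set.Iic u, g x) (g a) a := by
  have key : ∀ u : ℝ, ∫ x in Set.Iic u, g x
      = (∫ x in Set.Iic (0:ℝ), g x) + ∫ x in (0:ℝ)..u, g x := by
    intro u
    rw [← intervalIntegral.integral_Iic_sub_Iic hi.integrableOn hi.integrableOn]
    ring
  rw [show (fun u => ∫ x in Set.Iic u, g x)
      = fun u => (∫ x in Set.Iic (0:ℝ), g x) + ∫ x in (0:ℝ)..u, g x from funext key]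
  exact (intervalIntegral.integral_hasDerivAt_right hi.intervalIntegrable
    (hc.stronglyMeasurableAtFilter _ _) hc.continuousAt).const_add _

lemma cdf_hasDeriv (z : ℝ) : HasDerivAt stdNormalCDF (stdNormalPDF z) z :=
  ftc_Iic pdf_continuous pdf_integrable z

lemma cdf_continuous : Continuous stdNormalCDF :=
  continuous_iff_continuousAt.2 fun z => (cdf_hasDeriv z).continuousAt

lemma cdf_lipschitz (u v : ℝ) :
    |stdNormalCDF u - stdNormalCDF v| ≤ (Real.sqrt (2 * π))⁻¹ * |u - v| := by
  have := Convex.norm_image_sub_le_of_norm_hasDerivWithin_le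
    (f := stdNormalCDF) (f' := stdNormalPDF) (C := (Real.sqrt (2 * π))⁻¹) (s := Set.univ)
    (fun x _ => (cdf_hasDeriv x).hasDerivWithinAt)
    (fun x _ => by rw [Real.norm_eq_abs, abs_of_nonneg (pdf_nonneg x)]; exact pdf_le x)
    convex_univ (Set.mem_univ v) (Set.mem_univ u)
  simpa [Real.norm_eq_abs] using this

noncomputable def Dfun (ρ b x : ℝ) : ℝ :=
  stdNormalPDF x * (stdNormalCDF ((b - ρ * x) / Real.sqrt (1 - ρ ^ 2)) - stdNormalCDF b)

lemma abs_mul_exp_le (x : ℝ) : |x| * Real.exp (-x ^ 2 / 4) ≤ 2 := by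
  have h1 : |x| ≤ 2 * Real.exp (x ^ 2 / 4) := by
    nlinarith [Real.add_one_le_exp (x ^ 2 / 4), sq_abs x, sq_nonneg (|x| - 1),
      Real.exp_pos (x ^ 2 / 4)]
  calc |x| * Real.exp (-x ^ 2 / 4) ≤ (2 * Real.exp (x ^ 2 / 4)) * Real.exp (-x ^ 2 / 4) :=
        mul_le_mul_of_nonneg_right h1 (Real.exp_pos _).le
    _ = 2 := by
        rw [mul_assoc, ← Real.exp_add, show x ^ 2 / 4 + -x ^ 2 / 4 = 0 by ring,
          Real.exp_zero, mul_one]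

lemma exp_half_bound (b x : ℝ) :
    Real.exp (-x ^ 2 / 2) * (|b| + |x|) ≤ (|b| + 2) * Real.exp (-x ^ 2 / 4) := by
  have h2 : Real.exp (-x ^ 2 / 2) = Real.exp (-x ^ 2 / 4) * Real.exp (-x ^ 2 / 4) := by
    rw [← Real.exp_add]; ring_nf
  have h3 : Real.exp (-x ^ 2 / 4) ≤ 1 := Real.exp_le_one_iff.2 (by nlinarith [sq_nonneg x])
  have h4 := abs_mul_exp_le x
  have e := (Real.exp_pos (-x ^ 2 / 4)).le
  rw [h2]
  nlinarith [mul_le_mul_of_nonneg_left h4 e,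
    mul_le_mul_of_nonneg_right (mul_le_mul_of_nonneg_right h3 e) (abs_nonneg b)]

lemma Dbound {ε ρ : ℝ} (hε : ε ∈ Set.Ioo (0:ℝ) 1) (hρε : |ρ| ≤ 1 - ε) (b x : ℝ) :
    |Dfun ρ b x| ≤ |ρ| * ((Real.sqrt (2 * π))⁻¹ * (Real.sqrt (2 * π))⁻¹ *
      ((|b| + 2) / Real.sqrt (ε * (2 - ε)))) * Real.exp (-x ^ 2 / 4) := by
  obtain ⟨hε0, hε1⟩ := hε
  have hρ1 : |ρ| < 1 := lt_of_le_of_lt hρε (by linarith)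
  have h1 : (0:ℝ) < 1 - ρ ^ 2 := by nlinarith [sq_abs ρ, abs_nonneg ρ]
  set L := (Real.sqrt (2 * π))⁻¹ with hL
  have hLpos : (0:ℝ) ≤ L := by positivity
  set s := Real.sqrt (1 - ρ ^ 2) with hs
  have hs2 : s ^ 2 = 1 - ρ ^ 2 := Real.sq_sqrt h1.le
  have hspos : 0 < s := Real.sqrt_pos.2 h1
  have hsle1 : s ≤ 1 := by nlinarith [Real.sqrt_nonneg (1 - ρ ^ 2)]
  set s0 := Real.sqrt (ε * (2 - ε)) with hs0
  have hs0pos : 0 < s0 := Real.sqrt_pos.2 (by nlinarith)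
  have hs0le : s0 ≤ s := Real.sqrt_le_sqrt (by nlinarith [sq_abs ρ, abs_nonneg ρ])
  set u := (b - ρ * x) / s with hu
  have hub : |u - b| ≤ |ρ| * (|b| + |x|) / s0 := by
    have e1 : u - b = (b * (1 - s) - ρ * x) / s := by
      rw [hu]; field_simp; ring
    have h1s : 1 - s ≤ ρ ^ 2 := by nlinarith
    have num : |b * (1 - s) - ρ * x| ≤ |ρ| * (|b| + |x|) := by
      have := abs_sub (b * (1 - s)) (ρ * x)
      rw [abs_mul, abs_mul, abs_of_nonneg (by linarith : (0:ℝ) ≤ 1 - s)] at this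
      have hρρ : 1 - s ≤ |ρ| := by nlinarith [sq_abs ρ, abs_nonneg ρ]
      nlinarith [mul_le_mul_of_nonneg_left hρρ (abs_nonneg b), abs_nonneg ρ, abs_nonneg x]
    rw [e1, abs_div, abs_of_pos hspos]
    exact div_le_div₀ (by positivity) num hs0pos hs0le
  calc |Dfun ρ b x| = stdNormalPDF x * |stdNormalCDF u - stdNormalCDF b| := by
        rw [Dfun, abs_mul, abs_of_nonneg (pdf_nonneg x)]
    _ ≤ stdNormalPDF x * (L * |u - b|) :=
        mul_le_mul_of_nonneg_left (cdf_lipschitz u b) (pdf_nonneg x)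
    _ ≤ stdNormalPDF x * (L * (|ρ| * (|b| + |x|) / s0)) :=
        mul_le_mul_of_nonneg_left (mul_le_mul_of_nonneg_left hub hLpos) (pdf_nonneg x)
    _ = |ρ| * (L * L / s0) * (Real.exp (-x ^ 2 / 2) * (|b| + |x|)) := by
        rw [stdNormalPDF, ← hL]; ring
    _ ≤ |ρ| * (L * L / s0) * ((|b| + 2) * Real.exp (-x ^ 2 / 4)) := by
        apply mul_le_mul_of_nonneg_left (exp_half_bound b x) (by positivity)
    _ = |ρ| * (L * L * ((|b| + 2) / s0)) * Real.exp (-x ^ 2 / 4) := by ring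

lemma exp_quarter_integrable : Integrable (fun x : ℝ => Real.exp (-x ^ 2 / 4)) := by
  have : Integrable fun x : ℝ => Real.exp (-(1/4 : ℝ) * x ^ 2) :=
    integrable_exp_neg_mul_sq (by norm_num)
  refine this.congr (Filter.Eventually.of_forall fun t => ?_)
  ring_nf

noncomputable def Kc (ε b : ℝ) : ℝ :=
  (Real.sqrt (2 * π))⁻¹ * (Real.sqrt (2 * π))⁻¹ * ((|b| + 2) / Real.sqrt (ε * (2 - ε)))

lemma Kc_nonneg {ε : ℝ} (b : ℝ) (hε : ε ∈ Set.Ioo (0:ℝ) 1) : 0 ≤ Kc ε b := by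
  unfold Kc
  have : (0:ℝ) ≤ |b| + 2 := by positivity
  positivity

lemma D_continuous {ρ : ℝ} (b : ℝ) : Continuous (fun x => Dfun ρ b x) := by
  unfold Dfun
  exact pdf_continuous.mul
    (((cdf_continuous.comp (by fun_prop)).sub continuous_const))

lemma D_integrable {ε ρ : ℝ} (hε : ε ∈ Set.Ioo (0:ℝ) 1) (hρε : |ρ| ≤ 1 - ε) (b : ℝ) :
    Integrable (fun x => Dfun ρ b x) := by
  refine Integrable.mono ((exp_quarter_integrable.const_mul (|ρ| * Kc ε b))) 
    (D_continuous b).aestronglyMeasurable (Filter.Eventually.of_forall fun x => ?_)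
  rw [Real.norm_eq_abs, Real.norm_eq_abs]
  have h := Dbound hε hρε b x
  have : |ρ| * Kc ε b * Real.exp (-x ^ 2 / 4) ≤ |(|ρ| * Kc ε b * Real.exp (-x ^ 2 / 4))| :=
    le_abs_self _
  unfold Kc
  unfold Kc at this
  linarith

lemma phi_mul_cdf_integrable {c : ℝ → ℝ} (hc : Continuous c) :
    Integrable (fun x => stdNormalPDF x * stdNormalCDF (c x)) := by
  set T := ∫ t, stdNormalPDF t with hT
  have hT0 : 0 ≤ T := integral_nonneg pdf_nonneg
  refine Integrable.mono (pdf_integrable.const_mul T)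
    ((pdf_continuous.mul (cdf_continuous.comp hc)).aestronglyMeasurable)
    (Filter.Eventually.of_forall fun x => ?_)
  rw [Real.norm_eq_abs, Real.norm_eq_abs,
    abs_of_nonneg (mul_nonneg (pdf_nonneg x) (cdf_nonneg _)),
    abs_of_nonneg (mul_nonneg hT0 (pdf_nonneg x))]
  calc stdNormalPDF x * stdNormalCDF (c x) ≤ stdNormalPDF x * T :=
        mul_le_mul_of_nonneg_left (cdf_le _) (pdf_nonneg x)
    _ = T * stdNormalPDF x := mul_comm _ _

lemma Gfun_eq {ρ : ℝ} (hρ : |ρ| < 1) (a b : ℝ) :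
    Gfun ρ a b = ∫ x in Set.Iic a, Dfun ρ b x := by
  have h1 : (0:ℝ) < 1 - ρ ^ 2 := by nlinarith [sq_abs ρ, abs_nonneg ρ]
  have hc : Continuous fun x : ℝ => (b - ρ * x) / Real.sqrt (1 - ρ ^ 2) := by fun_prop
  unfold Gfun
  have e1 : ∫ x in Set.Iic a, ∫ y in Set.Iic b, biNormPDF ρ x y
      = ∫ x in Set.Iic a,
          stdNormalPDF x * stdNormalCDF ((b - ρ * x) / Real.sqrt (1 - ρ ^ 2)) :=
    setIntegral_congr_fun measurableSet_Iic fun x _ => inner_integral hρ b x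
  have e2 : stdNormalCDF a * stdNormalCDF b
      = ∫ x in Set.Iic a, stdNormalPDF x * stdNormalCDF b := by
    rw [show stdNormalCDF a = ∫ t in Set.Iic a, stdNormalPDF t from rfl,
      ← integral_mul_const]
  rw [e1, e2, ← integral_sub ((phi_mul_cdf_integrable hc).integrableOn)
    (((phi_mul_cdf_integrable continuous_const)).integrableOn)]
  refine setIntegral_congr_fun measurableSet_Iic fun x _ => ?_
  unfold Dfun
  ring

lemma G_hasDeriv {ε ρ : ℝ} (hε : ε ∈ Set.Ioo (0:ℝ) 1) (hρε : |ρ| ≤ 1 - ε) (b a : ℝ) :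
    HasDerivAt (fun a => Gfun ρ a b) (Dfun ρ b a) a := by
  have hρ1 : |ρ| < 1 := lt_of_le_of_lt hρε (by linarith [hε.1])
  rw [show (fun a => Gfun ρ a b) = fun a => ∫ x in Set.Iic a, Dfun ρ b x from
    funext fun a => Gfun_eq hρ1 a b]
  exact ftc_Iic (D_continuous b) (D_integrable hε hρε b) a

lemma Gbound {ε ρ : ℝ} (hε : ε ∈ Set.Ioo (0:ℝ) 1) (hρε : |ρ| ≤ 1 - ε) (a b : ℝ) :
    |Gfun ρ a b| ≤ |ρ| * Kc ε b * ∫ x, Real.exp (-x ^ 2 / 4) := by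
  have hρ1 : |ρ| < 1 := lt_of_le_of_lt hρε (by linarith [hε.1])
  rw [Gfun_eq hρ1 a b]
  have hK := Kc_nonneg b hε
  calc |∫ x in Set.Iic a, Dfun ρ b x| ≤ ∫ x in Set.Iic a, |Dfun ρ b x| := by
        simpa [Real.norm_eq_abs] using
          norm_integral_le_integral_norm (μ := volume.restrict (Set.Iic a)) (fun x => Dfun ρ b x)
    _ ≤ ∫ x in Set.Iic a, |ρ| * Kc ε b * Real.exp (-x ^ 2 / 4) := by
        refine integral_mono ((D_integrable hε hρε b).abs.integrableOn)
          ((exp_quarter_integrable.const_mul _).integrableOn) fun x => ?_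
        simpa [Kc] using Dbound hε hρε b x
    _ = |ρ| * Kc ε b * ∫ x in Set.Iic a, Real.exp (-x ^ 2 / 4) := integral_const_mul _ _
    _ ≤ |ρ| * Kc ε b * ∫ x, Real.exp (-x ^ 2 / 4) := by
        refine mul_le_mul_of_nonneg_left ?_ (by positivity)
        exact setIntegral_le_integral exp_quarter_integrable
          (Filter.Eventually.of_forall fun x => (Real.exp_pos _).le)

lemma Dbound' {ε ρ : ℝ} (hε : ε ∈ Set.Ioo (0:ℝ) 1) (hρε : |ρ| ≤ 1 - ε) (b x : ℝ) :
    |Dfun ρ b x| ≤ |ρ| * Kc ε b := by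
  have h := Dbound hε hρε b x
  have h3 : Real.exp (-x ^ 2 / 4) ≤ 1 := Real.exp_le_one_iff.2 (by nlinarith [sq_nonneg x])
  have hK := Kc_nonneg b hε
  calc |Dfun ρ b x| ≤ |ρ| * Kc ε b * Real.exp (-x ^ 2 / 4) := by simpa [Kc] using h
    _ ≤ |ρ| * Kc ε b * 1 := mul_le_mul_of_nonneg_left h3 (by positivity)
    _ = |ρ| * Kc ε b := mul_one _

lemma wnorm (k : ℤ) (hk : k ≠ 0) : ‖Complex.I / ((k : ℤ) : ℂ)‖ = 1 / |((k : ℤ) : ℝ)| := by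
  rw [norm_div, Complex.norm_I]
  congr 1
  rw [show ((k : ℤ) : ℂ) = (((k : ℤ) : ℝ) : ℂ) by push_cast; ring, Complex.norm_real,
    Real.norm_eq_abs]

lemma Enorm (k : ℤ) (lam : ℝ) :
    ‖Complex.exp (-Complex.I * ((k : ℤ) : ℂ) * (lam : ℂ)) - 1‖ ≤ 2 := by
  have h1 : ‖Complex.exp (-Complex.I * ((k : ℤ) : ℂ) * (lam : ℂ))‖ = 1 := by
    rw [Complex.norm_exp]
    have : (-Complex.I * ((k : ℤ) : ℂ) * (lam : ℂ)).re = 0 := by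
      simp [Complex.mul_re, Complex.mul_im]
    rw [this, Real.exp_zero]
  calc ‖Complex.exp (-Complex.I * ((k : ℤ) : ℂ) * (lam : ℂ)) - 1‖
      ≤ ‖Complex.exp (-Complex.I * ((k : ℤ) : ℂ) * (lam : ℂ))‖ + ‖(1:ℂ)‖ := norm_sub_le _ _
    _ ≤ 2 := by rw [h1, norm_one]; norm_num


/-- under `|ρ_k| ≤ 1 - ε` and `∑_{k≠0} |ρ_k|/|k| < ∞`, for fixed `b, λ`,
the series `S(a) = ∑_{k≠0} G(ρ_k; a, b)(i/k)(e^{-ikλ} - 1)` converges absolutely for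
every `a`, and `a ↦ S(a)` is differentiable with derivative given by the (absolutely
convergent) termwise-differentiated series. -/
theorem stmt18 (ε : ℝ) (hε : ε ∈ Set.Ioo (0 : ℝ) 1) (ρ : ℤ → ℝ)
    (h1 : ∀ k : ℤ, k ≠ 0 → |ρ k| ≤ 1 - ε)
    (h2 : Summable fun k : {k : ℤ // k ≠ 0} => |ρ (k : ℤ)| / |((k : ℤ) : ℝ)|)
    (b lam : ℝ) :
    (∀ a : ℝ, Summable fun k : {k : ℤ // k ≠ 0} =>
      ‖((Gfun (ρ (k : ℤ)) a b : ℝ) : ℂ) * (Complex.I / ((k : ℤ) : ℂ)) *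
        (Complex.exp (-Complex.I * ((k : ℤ) : ℂ) * (lam : ℂ)) - 1)‖) ∧
    (∀ a : ℝ,
      (Summable fun k : {k : ℤ // k ≠ 0} =>
        ‖((stdNormalPDF a *
              (stdNormalCDF ((b - ρ (k : ℤ) * a) / Real.sqrt (1 - ρ (k : ℤ) ^ 2)) -
                stdNormalCDF b) : ℝ) : ℂ) *
            (Complex.I / ((k : ℤ) : ℂ)) *
            (Complex.exp (-Complex.I * ((k : ℤ) : ℂ) * (lam : ℂ)) - 1)‖) ∧
      HasDerivAt
        (fun a : ℝ => ∑' k : {k : ℤ // k ≠ 0},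
          ((Gfun (ρ (k : ℤ)) a b : ℝ) : ℂ) * (Complex.I / ((k : ℤ) : ℂ)) *
            (Complex.exp (-Complex.I * ((k : ℤ) : ℂ) * (lam : ℂ)) - 1))
        (∑' k : {k : ℤ // k ≠ 0},
          ((stdNormalPDF a *
              (stdNormalCDF ((b - ρ (k : ℤ) * a) / Real.sqrt (1 - ρ (k : ℤ) ^ 2)) -
                stdNormalCDF b) : ℝ) : ℂ) *
            (Complex.I / ((k : ℤ) : ℂ)) *
            (Complex.exp (-Complex.I * ((k : ℤ) : ℂ) * (lam : ℂ)) - 1)) a) := by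
  have hρε : ∀ k : {k : ℤ // k ≠ 0}, |ρ (k : ℤ)| ≤ 1 - ε := fun k => h1 k k.2
  set Ie := ∫ x, Real.exp (-x ^ 2 / 4) with hIe
  have hIe0 : 0 ≤ Ie := integral_nonneg fun x => (Real.exp_pos _).le
  have hK := Kc_nonneg b hε
  -- norms of the constant complex factors
  have hnorm : ∀ (k : {k : ℤ // k ≠ 0}) (X : ℝ),
      ‖((X : ℝ) : ℂ) * (Complex.I / ((k : ℤ) : ℂ)) *
        (Complex.exp (-Complex.I * ((k : ℤ) : ℂ) * (lam : ℂ)) - 1)‖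
      ≤ |X| * (1 / |((k : ℤ) : ℝ)|) * 2 := by
    intro k X
    rw [norm_mul, norm_mul, Complex.norm_real, Real.norm_eq_abs, wnorm k k.2]
    exact mul_le_mul_of_nonneg_left (Enorm k lam) (by positivity)
  -- bound for the G-series terms
  have bound1 : ∀ (a : ℝ) (k : {k : ℤ // k ≠ 0}),
      ‖((Gfun (ρ (k : ℤ)) a b : ℝ) : ℂ) * (Complex.I / ((k : ℤ) : ℂ)) *
        (Complex.exp (-Complex.I * ((k : ℤ) : ℂ) * (lam : ℂ)) - 1)‖
      ≤ (Kc ε b * Ie * 2) * (|ρ (k : ℤ)| / |((k : ℤ) : ℝ)|) := by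
    intro a k
    refine (hnorm k _).trans ?_
    have hG := Gbound hε (hρε k) a b
    rw [← hIe] at hG
    calc |Gfun (ρ (k : ℤ)) a b| * (1 / |((k : ℤ) : ℝ)|) * 2
        ≤ (|ρ (k : ℤ)| * Kc ε b * Ie) * (1 / |((k : ℤ) : ℝ)|) * 2 := by
          have h0 : (0:ℝ) ≤ 1 / |((k : ℤ) : ℝ)| := by positivity
          nlinarith [abs_nonneg (Gfun (ρ (k : ℤ)) a b)]
      _ = (Kc ε b * Ie * 2) * (|ρ (k : ℤ)| / |((k : ℤ) : ℝ)|) := by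
          rw [div_eq_mul_inv, div_eq_mul_inv]; ring
  -- bound for the derivative-series terms
  have bound2 : ∀ (a : ℝ) (k : {k : ℤ // k ≠ 0}),
      ‖((Dfun (ρ (k : ℤ)) b a : ℝ) : ℂ) * (Complex.I / ((k : ℤ) : ℂ)) *
        (Complex.exp (-Complex.I * ((k : ℤ) : ℂ) * (lam : ℂ)) - 1)‖
      ≤ (Kc ε b * 2) * (|ρ (k : ℤ)| / |((k : ℤ) : ℝ)|) := by
    intro a k
    refine (hnorm k _).trans ?_
    have hD := Dbound' hε (hρε k) b a
    calc |Dfun (ρ (k : ℤ)) b a| * (1 / |((k : ℤ) : ℝ)|) * 2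
        ≤ (|ρ (k : ℤ)| * Kc ε b) * (1 / |((k : ℤ) : ℝ)|) * 2 := by
          have h0 : (0:ℝ) ≤ 1 / |((k : ℤ) : ℝ)| := by positivity
          nlinarith [abs_nonneg (Dfun (ρ (k : ℤ)) b a)]
      _ = (Kc ε b * 2) * (|ρ (k : ℤ)| / |((k : ℤ) : ℝ)|) := by
          rw [div_eq_mul_inv, div_eq_mul_inv]; ring
  have sum1 : ∀ a : ℝ, Summable fun k : {k : ℤ // k ≠ 0} =>
      ‖((Gfun (ρ (k : ℤ)) a b : ℝ) : ℂ) * (Complex.I / ((k : ℤ) : ℂ)) *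
        (Complex.exp (-Complex.I * ((k : ℤ) : ℂ) * (lam : ℂ)) - 1)‖ := fun a =>
    Summable.of_nonneg_of_le (fun k => norm_nonneg _) (bound1 a) (h2.mul_left _)
  refine ⟨sum1, fun a => ⟨?_, ?_⟩⟩
  · exact Summable.of_nonneg_of_le (fun k => norm_nonneg _)
      (fun k => by simpa [Dfun] using bound2 a k) (h2.mul_left _)
  · have main := hasDerivAt_tsum (g := fun (k : {k : ℤ // k ≠ 0}) (a : ℝ) =>
      ((Gfun (ρ (k : ℤ)) a b : ℝ) : ℂ) * (Complex.I / ((k : ℤ) : ℂ)) *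
        (Complex.exp (-Complex.I * ((k : ℤ) : ℂ) * (lam : ℂ)) - 1))
      (g' := fun (k : {k : ℤ // k ≠ 0}) (a : ℝ) =>
      ((Dfun (ρ (k : ℤ)) b a : ℝ) : ℂ) * (Complex.I / ((k : ℤ) : ℂ)) *
        (Complex.exp (-Complex.I * ((k : ℤ) : ℂ) * (lam : ℂ)) - 1))
      (u := fun k : {k : ℤ // k ≠ 0} => (Kc ε b * 2) * (|ρ (k : ℤ)| / |((k : ℤ) : ℝ)|))
      (y₀ := (0:ℝ)) (h2.mul_left _)
      (fun k y => (((G_hasDeriv hε (hρε k) b y).ofReal_comp).mul_const _).mul_const _)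
      (fun k y => bound2 y k) ((sum1 0).of_norm) a
    simpa [Dfun] using main
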